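/- Let R be a commutative ring, A an n×k matrix and G a k×n matrix over R with G·A = I_k (k < n). Suppose the kernel of the R-linear map v ↦ G·v on Rⁿ equals the image of an n×(n−k) matrix H, and define J := I_n − A·G. Then there exists an (n−k)×n matrix S over R with J = H·S, and the n×n block matrix F := (A | H) is invertible with inverse the block matrix formed by stacking G on top of S. -/

import Mathlib

/-- Let `R` be a commutative ring, `A` an `n×k` matrix and `G` a `k×n` matrix over `R`
with `G * A = 1` (`k < n`).  Suppose the kernel of `v ↦ G.mulVec v` equals the image of an
`n×(n-k)` matrix `H`, and let `J := 1 - A * G`.  Then there is an `(n-k)×n` matrix `S`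
with `J = H * S`, and the block matrix `F := (A | H)` is invertible with inverse the block
matrix obtained by stacking `G` on top of `S`. -/
theorem stmt_10 {R : Type*} [CommRing R] {n k : ℕ} (hk : k < n)
    (A : Matrix (Fin n) (Fin k) R) (G : Matrix (Fin k) (Fin n) R)
    (hGA : G * A = 1)
    (H : Matrix (Fin n) (Fin (n - k)) R)
    (hker : ∀ v : Fin n → R, G.mulVec v = 0 ↔ ∃ w : Fin (n - k) → R, H.mulVec w = v) :
    ∃ S : Matrix (Fin (n - k)) (Fin n) R,
      (1 : Matrix (Fin n) (Fin n) R) - A * G = H * S ∧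
      Matrix.fromCols A H * Matrix.fromRows G S = 1 ∧
      Matrix.fromRows G S * Matrix.fromCols A H = 1 := by
  have hGJ : G * ((1 : Matrix (Fin n) (Fin n) R) - A * G) = 0 := by
    rw [Matrix.mul_sub, Matrix.mul_one, ← Matrix.mul_assoc, hGA, Matrix.one_mul, sub_self]
  have hcol : ∀ i : Fin n, ∃ w : Fin (n - k) → R,
      H.mulVec w = fun r => ((1 : Matrix (Fin n) (Fin n) R) - A * G) r i := by
    intro i
    rw [← hker]
    funext r
    have := congrFun (congrFun hGJ r) i
    simpa [Matrix.mulVec, Matrix.mul_apply, dotProduct] using this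
  choose w hw using hcol
  refine ⟨Matrix.of (fun j i => w i j), ?_, ?_, ?_⟩
  · funext r i
    have := congrFun (hw i) r
    simpa [Matrix.mul_apply, Matrix.mulVec, dotProduct] using this.symm
  · rw [Matrix.fromCols_mul_fromRows]
    have hJ : ((1 : Matrix (Fin n) (Fin n) R) - A * G)
        = H * Matrix.of (fun j i => w i j) := by
      funext r i
      have := congrFun (hw i) r
      simpa [Matrix.mul_apply, Matrix.mulVec, dotProduct] using this.symm
    rw [← hJ]; abel
  · have e : Fin n ≃ Fin k ⊕ Fin (n - k) :=
      (finCongr (Nat.add_sub_cancel' hk.le)).symm.trans finSumFinEquiv.symm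
    rw [← Matrix.fromCols_mul_fromRows_eq_one_comm e]
    rw [Matrix.fromCols_mul_fromRows]
    have hJ : ((1 : Matrix (Fin n) (Fin n) R) - A * G)
        = H * Matrix.of (fun j i => w i j) := by
      funext r i
      have := congrFun (hw i) r
      simpa [Matrix.mul_apply, Matrix.mulVec, dotProduct] using this.symm
    rw [← hJ]; abel
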